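/- arXiv:1707.01678 — 5 statements merged into one kernel-verified Lean document; each statement's English description precedes it below -/
import Mathlib

section
/- Let (A_n) be a sequence of independent events in a probability space and for each n let E_n be an event independent of A_n. Assume P(E_n) → 0 as n → ∞, and set B_n = A_n \ E_n. If ∑_n P(A_n) = ∞, then almost surely infinitely many of the events B_n occur (i.e., P(limsup B_n) = 1). -/
set_option maxHeartbeats 1000000


open MeasureTheory ProbabilityTheory Filter MeasurableSpace
open scoped Topology
open scoped ENNReal

private lemma ennreal_factor_le_one {p : ℝ≥0∞} (hp : p ≤ 1) : (1 - p) * (1 + p) ≤ 1 := by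
  calc (1 - p) * (1 + p) = (1 - p) + (1 - p) * p := by ring
    _ ≤ (1 - p) + p := by
        gcongr
        exact mul_le_of_le_one_left zero_le tsub_le_self
    _ = 1 := tsub_add_cancel_of_le hp

private lemma ennreal_sum_one_add_le_prod (F : Finset ℕ) (p : ℕ → ℝ≥0∞) :
    (∑ n ∈ F, p n) + 1 ≤ ∏ n ∈ F, (1 + p n) := by
  classical
  induction F using Finset.induction with
  | empty => simp
  | insert _ _ hx ih =>
    rename_i a F
    rw [Finset.sum_insert hx, Finset.prod_insert hx]
    calc (p a + ∑ n ∈ F, p n) + 1 = ((∑ n ∈ F, p n) + 1) + p a := by ring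
      _ ≤ (∏ n ∈ F, (1 + p n)) + p a * ∏ n ∈ F, (1 + p n) := by
          gcongr
          exact le_mul_of_one_le_right zero_le
            (le_trans (by simp) (ennreal_sum_one_add_le_prod_aux F p))
      _ = (1 + p a) * ∏ n ∈ F, (1 + p n) := by ring
  where ennreal_sum_one_add_le_prod_aux (F : Finset ℕ) (p : ℕ → ℝ≥0∞) :
    (1 : ℝ≥0∞) ≤ ∏ n ∈ F, (1 + p n) := Finset.one_le_prod' fun i _ => le_self_add

private lemma ennreal_prod_one_sub_le_inv (F : Finset ℕ) (p : ℕ → ℝ≥0∞)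
    (hp : ∀ n, p n ≤ 1) :
    ∏ n ∈ F, (1 - p n) ≤ ((∑ n ∈ F, p n) + 1)⁻¹ := by
  rw [ENNReal.le_inv_iff_mul_le]
  calc (∏ n ∈ F, (1 - p n)) * ((∑ n ∈ F, p n) + 1)
      ≤ (∏ n ∈ F, (1 - p n)) * ∏ n ∈ F, (1 + p n) := by
        gcongr
        exact ennreal_sum_one_add_le_prod F p
    _ = ∏ n ∈ F, ((1 - p n) * (1 + p n)) := (Finset.prod_mul_distrib).symm
    _ ≤ ∏ n ∈ F, 1 := Finset.prod_le_prod' fun i _ => ennreal_factor_le_one (hp i)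
    _ = 1 := by simp

/-- **Contaminated second Borel–Cantelli.** If the events `A n` are independent,
each `E n` is independent of `A n` (i.e. `P (A n ∩ E n) = P (A n) * P (E n)`),
`P (E n) → 0`, and `∑ P (A n) = ∞`, then almost surely infinitely many of the
events `B n = A n \ E n` occur, i.e. `P (limsup B) = 1`. -/
theorem contaminated_borel_cantelli_two
    {Ω : Type*} [MeasureSpace Ω] [IsProbabilityMeasure (ℙ : Measure Ω)]
    (A E : ℕ → Set Ω)
    (hA : ∀ n, MeasurableSet (A n)) (hE : ∀ n, MeasurableSet (E n))
    (hAindep : iIndepSet A ℙ)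
    (hAE : ∀ n, ℙ (A n ∩ E n) = ℙ (A n) * ℙ (E n))
    (hE0 : Tendsto (fun n => ℙ (E n)) atTop (nhds 0))
    (B : ℕ → Set Ω) (hB : ∀ n, B n = A n \ E n)
    (hsum : ∑' n, ℙ (A n) = ∞) :
    ℙ (limsup B atTop) = 1 := by
  classical
  set p : ℕ → ℝ≥0∞ := fun n => ℙ (A n) with hp
  have hp1 : ∀ n, p n ≤ 1 := fun n => prob_le_one
  have hBm : ∀ n, MeasurableSet (B n) := fun n => (hB n) ▸ (hA n).diff (hE n)
  rw [← prob_compl_eq_zero_iff (MeasurableSet.measurableSet_limsup hBm), limsup_compl,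
    liminf_eq_iSup_iInf_of_nat]
  simp only [Set.iSup_eq_iUnion]
  refine measure_iUnion_null fun m => ?_
  -- the tail intersection
  set T : Set Ω := ⨅ i ≥ m, (B i)ᶜ with hT
  -- key claim: for every c, ℙ T ≤ (c+1)⁻¹ + (c+1)⁻¹
  have key : ∀ c : ℕ, ℙ T ≤ ((c : ℝ≥0∞) + 1)⁻¹ + ((c : ℝ≥0∞) + 1)⁻¹ := by
    intro c
    set ε : ℝ≥0∞ := ((c : ℝ≥0∞) + 1)⁻¹ * ((c : ℝ≥0∞) + 2)⁻¹ with hε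
    have hc1top : (c : ℝ≥0∞) + 1 ≠ ∞ := by
      simp [ENNReal.add_ne_top]
    have hc2top : (c : ℝ≥0∞) + 2 ≠ ∞ := by
      simp [ENNReal.add_ne_top]
    have hεpos : 0 < ε := by
      apply ENNReal.mul_pos <;> simp [hc1top, hc2top]
    obtain ⟨m'', hm''⟩ : ∃ m'', ∀ n ≥ m'', ℙ (E n) < ε :=
      eventually_atTop.mp (hE0.eventually (gt_mem_nhds hεpos))
    set m' : ℕ := max m m'' with hm'
    -- tail sum is infinite
    have htail : ∑' k, p (k + m') = ∞ := by
      by_contra h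
      have h1 : ∑ i ∈ Finset.range m', p i ≠ ∞ :=
        (ENNReal.sum_lt_top.mpr fun i _ => lt_of_le_of_lt (hp1 i) ENNReal.one_lt_top).ne
      have := Summable.sum_add_tsum_nat_add' (f := p) (k := m') ENNReal.summable
      rw [hsum] at this
      exact (ENNReal.add_ne_top.mpr ⟨h1, h⟩) this
    set Q : ℕ → ℝ≥0∞ := fun n => ∑ k ∈ Finset.range n, p (k + m') with hQ
    have hQtop : Tendsto Q atTop (𝓝 ∞) := by
      have := ENNReal.tendsto_nat_tsum (fun k => p (k + m'))
      rwa [htail] at this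
    have hex : ∃ n, (c : ℝ≥0∞) ≤ Q n := by
      obtain ⟨n, hn⟩ := (hQtop.eventually
        (lt_mem_nhds (show (c : ℝ≥0∞) < ∞ from by simp))).exists
      exact ⟨n, hn.le⟩
    set n₀ : ℕ := Nat.find hex with hn₀
    have hlow : (c : ℝ≥0∞) ≤ Q n₀ := Nat.find_spec hex
    have hhigh : Q n₀ ≤ (c : ℝ≥0∞) + 1 := by
      rcases Nat.eq_zero_or_pos n₀ with h0 | hpos
      · rw [h0]; simp [hQ]
      · obtain ⟨k, hk⟩ := Nat.exists_eq_succ_of_ne_zero hpos.ne'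
        have hk' : ¬ ((c : ℝ≥0∞) ≤ Q k) := Nat.find_min hex (by omega)
        rw [hk, hQ]
        simp only [Finset.sum_range_succ]
        exact add_le_add (not_le.mp hk').le (hp1 _)
    set F : Finset ℕ := Finset.Ico m' (m' + n₀) with hF
    have hFsum : ∑ n ∈ F, p n = Q n₀ := by
      rw [hF, hQ, Finset.sum_Ico_eq_sum_range]
      simp [add_comm m']
    -- set inclusion
    have hsub : T ⊆ (⋂ n ∈ F, (A n)ᶜ) ∪ (⋃ n ∈ F, A n ∩ E n) := by
      intro ω hω
      by_cases hx : ω ∈ ⋃ n ∈ F, A n ∩ E n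
      · exact Or.inr hx
      · refine Or.inl (Set.mem_iInter₂.mpr fun n hn => ?_)
        have hnm : m ≤ n := le_trans (le_max_left m m'') (Finset.mem_Ico.mp hn).1
        have hωB : ω ∈ (B n)ᶜ := by
          have := Set.mem_iInter.mp (Set.mem_iInter.mp hω n) hnm
          exact this
        rw [hB n] at hωB
        intro hωA
        exact hx (Set.mem_biUnion hn ⟨hωA, by
          by_contra hωE
          exact hωB ⟨hωA, hωE⟩⟩)
    -- measure estimate
    have hMeas1 : ℙ (⋂ n ∈ F, (A n)ᶜ) = ∏ n ∈ F, (1 - p n) := by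
      have hind := (iIndepSet_iff_iIndep A ℙ).mp hAindep
      have := hind.meas_biInter (S := F) (s := fun n => (A n)ᶜ)
        (fun i _ => (measurableSet_generateFrom (Set.mem_singleton _)).compl)
      rw [this]
      exact Finset.prod_congr rfl fun n _ => prob_compl_eq_one_sub (hA n)
    have hbound1 : ℙ (⋂ n ∈ F, (A n)ᶜ) ≤ ((c : ℝ≥0∞) + 1)⁻¹ := by
      rw [hMeas1]
      refine le_trans (ennreal_prod_one_sub_le_inv F p hp1) ?_
      rw [ENNReal.inv_le_inv]
      rw [hFsum]
      exact add_le_add hlow le_rfl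
    have hbound2 : ℙ (⋃ n ∈ F, A n ∩ E n) ≤ ((c : ℝ≥0∞) + 1)⁻¹ := by
      refine le_trans (measure_biUnion_finset_le F _) ?_
      have hstep : ∑ n ∈ F, ℙ (A n ∩ E n) ≤ ∑ n ∈ F, p n * ε := by
        refine Finset.sum_le_sum fun n hn => ?_
        rw [hAE n]
        exact mul_le_mul_right (hm'' n (le_trans (le_max_right m m'')
          (Finset.mem_Ico.mp hn).1)).le _
      refine le_trans hstep ?_
      rw [← Finset.sum_mul, hFsum]
      calc Q n₀ * ε ≤ ((c : ℝ≥0∞) + 1) * ε := mul_le_mul_left hhigh _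
        _ = ((c : ℝ≥0∞) + 2)⁻¹ := by
            rw [hε, ← mul_assoc, ENNReal.mul_inv_cancel (by simp) hc1top, one_mul]
        _ ≤ ((c : ℝ≥0∞) + 1)⁻¹ := by
            rw [ENNReal.inv_le_inv]
            gcongr
            norm_num
    calc ℙ T ≤ ℙ ((⋂ n ∈ F, (A n)ᶜ) ∪ (⋃ n ∈ F, A n ∩ E n)) := measure_mono hsub
      _ ≤ ℙ (⋂ n ∈ F, (A n)ᶜ) + ℙ (⋃ n ∈ F, A n ∩ E n) := measure_union_le _ _
      _ ≤ ((c : ℝ≥0∞) + 1)⁻¹ + ((c : ℝ≥0∞) + 1)⁻¹ := add_le_add hbound1 hbound2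
  -- conclude
  have hten : Tendsto (fun c : ℕ => ((c : ℝ≥0∞) + 1)⁻¹ + ((c : ℝ≥0∞) + 1)⁻¹)
      atTop (𝓝 0) := by
    have h1 : Tendsto (fun c : ℕ => ((c : ℝ≥0∞) + 1)⁻¹) atTop (𝓝 0) := by
      have := ENNReal.tendsto_inv_nat_nhds_zero.comp (tendsto_add_atTop_nat 1)
      convert this using 2 with c
      simp only [Function.comp]
      push_cast
      ring
    simpa using h1.add h1
  have := ge_of_tendsto' hten key
  exact le_antisymm (by simp at this; exact this.le) zero_le
end

section
/- Let (A_n) be a sequence of independent events in a probability space with P(A_n) > 0, and let (E_n) be any sequence of events. Define e_n by P(E_n ∩ A_n) = e_n · P(A_n). If ∑_n P(A_n) = ∞ and e_n → 0 as n → ∞, then the events B_n = A_n \ E_n occur infinitely often almost surely, i.e., P(limsup_n B_n) = 1. -/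
open MeasureTheory ProbabilityTheory Filter
open scoped ENNReal

/-- The Chung–Erdős inequality via Cauchy–Schwarz. -/
lemma chung_erdos_aux {Ω : Type*} [MeasurableSpace Ω] (μ : Measure Ω)
    (B : ℕ → Set Ω) (hB : ∀ n, MeasurableSet (B n)) (F : Finset ℕ) :
    (∑ k ∈ F, μ (B k)) ^ 2 ≤
      (∑ j ∈ F, ∑ k ∈ F, μ (B j ∩ B k)) * μ (⋃ k ∈ F, B k) := by
  set X : Ω → ℝ≥0∞ := fun ω => ∑ k ∈ F, (B k).indicator 1 ω with hX
  have hXm : Measurable X := by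
    apply Finset.measurable_sum
    intro k _
    exact (measurable_one.indicator (hB k))
  set U : Set Ω := ⋃ k ∈ F, B k with hU
  have hUm : MeasurableSet U := MeasurableSet.biUnion F.countable_toSet (fun k _ => hB k)
  have hXU : ∀ ω, X ω = X ω * U.indicator 1 ω := by
    intro ω
    by_cases hω : ω ∈ U
    · rw [Set.indicator_of_mem hω, Pi.one_apply, mul_one]
    · have : X ω = 0 := by
        rw [hX]
        apply Finset.sum_eq_zero
        intro k hk
        apply Set.indicator_of_notMem
        intro hmem
        exact hω (Set.mem_biUnion hk hmem)
      rw [this, zero_mul]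
  have hint1 : ∫⁻ ω, X ω ∂μ = ∑ k ∈ F, μ (B k) := by
    rw [hX, lintegral_finset_sum _ (fun k _ => measurable_one.indicator (hB k))]
    refine Finset.sum_congr rfl fun k _ => ?_
    exact lintegral_indicator_one (hB k)
  have hint2 : ∫⁻ ω, X ω * X ω ∂μ = ∑ j ∈ F, ∑ k ∈ F, μ (B j ∩ B k) := by
    have : ∀ ω, X ω * X ω = ∑ j ∈ F, ∑ k ∈ F, (B j ∩ B k).indicator 1 ω := by
      intro ω
      rw [hX, Finset.sum_mul_sum]
      refine Finset.sum_congr rfl fun j _ => Finset.sum_congr rfl fun k _ => ?_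
      rw [Set.inter_indicator_one, Pi.mul_apply]
    simp_rw [this]
    rw [lintegral_finset_sum _ (fun j _ => Finset.measurable_sum _
      (fun k _ => measurable_one.indicator ((hB j).inter (hB k))))]
    refine Finset.sum_congr rfl fun j _ => ?_
    rw [lintegral_finset_sum _ (fun k _ => measurable_one.indicator ((hB j).inter (hB k)))]
    refine Finset.sum_congr rfl fun k _ => ?_
    exact lintegral_indicator_one ((hB j).inter (hB k))
  have hpq : Real.HolderConjugate 2 2 := Real.HolderConjugate.two_two
  have hCS := ENNReal.lintegral_mul_le_Lp_mul_Lq μ hpq hXm.aemeasurable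
    ((measurable_one.indicator hUm)).aemeasurable (f := X) (g := U.indicator (1 : Ω → ℝ≥0∞))
  have h1 : ∫⁻ a, (X * U.indicator (1 : Ω → ℝ≥0∞)) a ∂μ = ∑ k ∈ F, μ (B k) := by
    rw [← hint1]
    exact lintegral_congr fun ω => (hXU ω).symm
  have h2 : ∫⁻ a, X a ^ (2 : ℝ) ∂μ = ∑ j ∈ F, ∑ k ∈ F, μ (B j ∩ B k) := by
    rw [← hint2]
    refine lintegral_congr fun ω => ?_
    rw [show ((2:ℝ)) = ((2:ℕ):ℝ) by norm_num, ENNReal.rpow_natCast, sq]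
  have h3 : ∫⁻ a, U.indicator (1 : Ω → ℝ≥0∞) a ^ (2 : ℝ) ∂μ = μ U := by
    have : ∀ a, U.indicator (1 : Ω → ℝ≥0∞) a ^ (2:ℝ) = U.indicator (1 : Ω → ℝ≥0∞) a := by
      intro a
      by_cases ha : a ∈ U <;>
        simp [Set.indicator_of_mem, Set.indicator_of_notMem, ha, ENNReal.rpow_two]
    simp_rw [this]
    exact lintegral_indicator_one hUm
  rw [h1, h2, h3] at hCS
  calc (∑ k ∈ F, μ (B k)) ^ 2
      ≤ ((∑ j ∈ F, ∑ k ∈ F, μ (B j ∩ B k)) ^ (1/2 : ℝ) * μ U ^ (1/2 : ℝ)) ^ 2 :=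
        pow_le_pow_left' hCS 2
    _ = (∑ j ∈ F, ∑ k ∈ F, μ (B j ∩ B k)) * μ U := by
        rw [mul_pow, ← ENNReal.rpow_natCast (_ ^ (1/2:ℝ)), ← ENNReal.rpow_natCast (μ U ^ (1/2:ℝ)),
          ← ENNReal.rpow_mul, ← ENNReal.rpow_mul]
        norm_num

/-- Divergent series have arbitrarily large partial sums over `Ico M n`. -/
lemma exists_Ico_sum_ge {p : ℕ → ℝ≥0∞} (hsum : ∑' n, p n = ∞)
    (hfin : ∀ n, p n ≠ ∞) (M : ℕ) (C : ℝ≥0∞) (hC : C ≠ ∞) :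
    ∃ n, C ≤ ∑ k ∈ Finset.Ico M n, p k := by
  have hM : ∑ k ∈ Finset.range M, p k ≠ ∞ :=
    (ENNReal.sum_lt_top.2 fun k _ => (hfin k).lt_top).ne
  have : C + ∑ k ∈ Finset.range M, p k < ⨆ n, ∑ k ∈ Finset.range n, p k := by
    rw [← ENNReal.tsum_eq_iSup_nat, hsum]
    exact ENNReal.add_lt_top.2 ⟨hC.lt_top, hM.lt_top⟩ |>.trans_le le_top
  obtain ⟨n, hn⟩ := lt_iSup_iff.1 this
  refine ⟨max n M, ?_⟩
  have hle : M ≤ max n M := le_max_right _ _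
  have hsum' : ∑ k ∈ Finset.range M, p k + ∑ k ∈ Finset.Ico M (max n M), p k
      = ∑ k ∈ Finset.range (max n M), p k := Finset.sum_range_add_sum_Ico _ hle
  have hn' : C + ∑ k ∈ Finset.range M, p k ≤ ∑ k ∈ Finset.range (max n M), p k :=
    hn.le.trans (Finset.sum_le_sum_of_subset (Finset.range_subset_range.2 (le_max_left _ _)))
  rw [← hsum', add_comm (∑ k ∈ Finset.range M, p k)] at hn'
  exact (ENNReal.add_le_add_iff_right hM).1 hn'

/-- **Proposition.** Let `A n` be independent events with `P (A n) > 0`, let `E n`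
be any events, and define `e n` by `P (E n ∩ A n) = e n * P (A n)`. If
`∑ P (A n) = ∞` and `e n → 0`, then the events `B n = A n \ E n` occur infinitely
often almost surely, i.e. `P (limsup B) = 1`. -/
theorem contaminated_borel_cantelli_prop
    {Ω : Type*} [MeasureSpace Ω] [IsProbabilityMeasure (ℙ : Measure Ω)]
    (A E : ℕ → Set Ω)
    (hA : ∀ n, MeasurableSet (A n)) (hE : ∀ n, MeasurableSet (E n))
    (hApos : ∀ n, 0 < ℙ (A n))
    (hAindep : iIndepSet A ℙ)
    (e : ℕ → ℝ≥0∞)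
    (he : ∀ n, ℙ (E n ∩ A n) = e n * ℙ (A n))
    (he0 : Tendsto e atTop (nhds 0))
    (hsum : ∑' n, ℙ (A n) = ∞)
    (B : ℕ → Set Ω) (hB : ∀ n, B n = A n \ E n) :
    ℙ (limsup B atTop) = 1 := by
  have hBm : ∀ n, MeasurableSet (B n) := fun n => (hB n) ▸ ((hA n).diff (hE n))
  have hBA : ∀ n, B n ⊆ A n := fun n => (hB n) ▸ Set.diff_subset
  -- pairwise independence of the `A`s
  have hpair : ∀ j k, j ≠ k → ℙ (A j ∩ A k) = ℙ (A j) * ℙ (A k) := by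
    intro j k hjk
    have h := hAindep.meas_biInter ({j, k} : Finset ℕ)
    rw [Finset.set_biInter_insert, Finset.set_biInter_singleton,
      Finset.prod_insert (by simpa using hjk), Finset.prod_singleton] at h
    exact h
  -- lower bound on `ℙ (B k)`
  have hBlow : ∀ (η : ℝ≥0∞) (k : ℕ), e k ≤ η → (1 - η) * ℙ (A k) ≤ ℙ (B k) := by
    intro η k hk
    have hup : ℙ (B k) + ℙ (A k ∩ E k) = ℙ (A k) := by
      rw [hB k]; exact measure_diff_add_inter _ (hE k)
    have hEA : ℙ (A k ∩ E k) = e k * ℙ (A k) := by rw [Set.inter_comm]; exact he k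
    have hsub : ℙ (A k) - e k * ℙ (A k) = ℙ (B k) := by
      refine ENNReal.sub_eq_of_eq_add (by rw [← hEA]; exact measure_ne_top _ _) ?_
      rw [← hEA, ← hup]
    calc (1 - η) * ℙ (A k) = 1 * ℙ (A k) - η * ℙ (A k) :=
          ENNReal.sub_mul (fun _ _ => measure_ne_top _ _)
      _ ≤ 1 * ℙ (A k) - e k * ℙ (A k) :=
          tsub_le_tsub_left (mul_le_mul_left hk _) _
      _ = ℙ (B k) := by rw [one_mul, hsub]
  -- the decreasing family of tails
  set C : ℕ → Set Ω := fun m => ⋃ k, ⋃ (_ : m ≤ k), B k with hC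
  have hCm : ∀ m, MeasurableSet (C m) := fun m =>
    MeasurableSet.iUnion fun k => MeasurableSet.iUnion fun _ => hBm k
  have hCanti : Antitone C := by
    intro m m' hmm'
    simp only [hC]
    exact Set.iUnion₂_subset fun k hk =>
      Set.subset_iUnion₂ (s := fun k (_ : m ≤ k) => B k) k (hmm'.trans hk)
  have hlimsup : limsup B atTop = ⋂ m, C m := by
    rw [limsup_eq_iInf_iSup_of_nat]
    simp only [hC, Set.iInf_eq_iInter, Set.iSup_eq_iUnion, ge_iff_le]
  have hinf : ℙ (limsup B atTop) = ⨅ m, ℙ (C m) := by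
    rw [hlimsup]
    exact hCanti.measure_iInter (fun m => (hCm m).nullMeasurableSet)
      ⟨0, measure_ne_top _ _⟩
  -- key quantitative estimate
  have key : ∀ (ε : ℝ≥0∞), 0 < ε → ε ≤ 1 → ∀ m, 1 ≤ ℙ (C m) + ε := by
    intro ε hε hε1 m
    set η : ℝ≥0∞ := ε / 2 / 2 with hη
    set δ : ℝ≥0∞ := ε / 2 with hδ
    have hδ0 : δ ≠ 0 := ENNReal.div_ne_zero.2 ⟨hε.ne', ENNReal.ofNat_ne_top⟩
    have hη0 : η ≠ 0 := ENNReal.div_ne_zero.2 ⟨hδ0, ENNReal.ofNat_ne_top⟩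
    have hηε : η ≤ ε := (ENNReal.half_le_self).trans ENNReal.half_le_self
    have hη1 : η ≤ 1 := hηε.trans hε1
    have hδtop : δ ≠ ∞ := (ENNReal.half_le_self.trans hε1).trans_lt ENNReal.one_lt_top |>.ne
    -- choose N with e k ≤ η for k ≥ N
    obtain ⟨N, hN⟩ := (eventually_atTop.1 (he0.eventually_le_const hη0.bot_lt))
    set M := max m N with hM
    -- choose n with a big partial sum
    obtain ⟨n, hn⟩ := exists_Ico_sum_ge hsum (fun k => measure_ne_top _ _) M
      (1 + δ⁻¹) (by simp [ENNReal.inv_ne_top.2 hδ0])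
    set F := Finset.Ico M n with hF
    set S : ℝ≥0∞ := ∑ k ∈ F, ℙ (A k) with hS
    have hS1 : 1 ≤ S := le_trans (le_add_right le_rfl) hn
    have hSδ : 1 ≤ δ * S := by
      calc (1:ℝ≥0∞) = δ * δ⁻¹ := (ENNReal.mul_inv_cancel hδ0 hδtop).symm
        _ ≤ δ * S := mul_le_mul_right (le_trans (le_add_left le_rfl) hn) _
    have hStop : S ≠ ∞ := (ENNReal.sum_lt_top.2 fun k _ => measure_lt_top _ _).ne
    have hS0 : S ≠ 0 := fun h => by simp [h] at hS1
    -- sum of B-measures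
    have hT : (1 - η) * S ≤ ∑ k ∈ F, ℙ (B k) := by
      rw [hS, Finset.mul_sum]
      refine Finset.sum_le_sum fun k hk => ?_
      exact hBlow η k (hN k ((le_max_right m N).trans (Finset.mem_Ico.1 hk).1))
    -- second moment bound
    have hD : ∑ j ∈ F, ∑ k ∈ F, ℙ (B j ∩ B k) ≤ S * S + S := by
      have hterm : ∀ j ∈ F, ∑ k ∈ F, ℙ (B j ∩ B k) ≤ ℙ (A j) * S + ℙ (A j) := by
        intro j hj
        rw [← Finset.add_sum_erase _ _ hj]
        have h1 : ℙ (B j ∩ B j) ≤ ℙ (A j) := measure_mono ((Set.inter_subset_left).trans (hBA j))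
        have h2 : ∑ k ∈ F.erase j, ℙ (B j ∩ B k) ≤ ℙ (A j) * S := by
          calc ∑ k ∈ F.erase j, ℙ (B j ∩ B k)
              ≤ ∑ k ∈ F.erase j, ℙ (A j) * ℙ (A k) := by
                refine Finset.sum_le_sum fun k hk => ?_
                rw [← hpair j k (Finset.ne_of_mem_erase hk).symm]
                exact measure_mono (Set.inter_subset_inter (hBA j) (hBA k))
            _ ≤ ∑ k ∈ F, ℙ (A j) * ℙ (A k) :=
                Finset.sum_le_sum_of_subset (Finset.erase_subset _ _)
            _ = ℙ (A j) * S := by rw [hS, Finset.mul_sum]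
        calc ℙ (B j ∩ B j) + ∑ k ∈ F.erase j, ℙ (B j ∩ B k)
            ≤ ℙ (A j) + ℙ (A j) * S := add_le_add h1 h2
          _ = ℙ (A j) * S + ℙ (A j) := add_comm _ _
      calc ∑ j ∈ F, ∑ k ∈ F, ℙ (B j ∩ B k)
          ≤ ∑ j ∈ F, (ℙ (A j) * S + ℙ (A j)) := Finset.sum_le_sum hterm
        _ = S * S + S := by
            rw [Finset.sum_add_distrib, ← Finset.sum_mul, ← hS, Finset.sum_mul]
    -- Chung–Erdős
    have hCE := chung_erdos_aux ℙ B hBm F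
    set U : Set Ω := ⋃ k ∈ F, B k with hUdef
    have hUC : U ⊆ C m := by
      refine Set.iUnion₂_subset fun k hk => ?_
      exact Set.subset_iUnion₂ (s := fun k (_ : m ≤ k) => B k) k
        ((le_max_left m N).trans (Finset.mem_Ico.1 hk).1)
    set x : ℝ≥0∞ := ℙ (C m) with hx
    have hUx : ℙ U ≤ x := measure_mono hUC
    have hmain : (1 - η) * (1 - η) * (S * S) ≤ (x + δ) * (S * S) := by
      calc (1 - η) * (1 - η) * (S * S)
          = ((1 - η) * S) * ((1 - η) * S) := by ring
        _ ≤ (∑ k ∈ F, ℙ (B k)) * (∑ k ∈ F, ℙ (B k)) := mul_le_mul' hT hT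
        _ = (∑ k ∈ F, ℙ (B k)) ^ 2 := (sq _).symm
        _ ≤ (∑ j ∈ F, ∑ k ∈ F, ℙ (B j ∩ B k)) * ℙ U := hCE
        _ ≤ (S * S + S) * x := mul_le_mul' hD hUx
        _ = x * (S * S) + x * S := by ring
        _ ≤ x * (S * S) + 1 * S :=
            add_le_add_right (mul_le_mul_left prob_le_one _) _
        _ ≤ x * (S * S) + (δ * S) * S :=
            add_le_add_right (mul_le_mul_left hSδ _) _
        _ = (x + δ) * (S * S) := by ring
    have hSS0 : S * S ≠ 0 := mul_ne_zero hS0 hS0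
    have hSStop : S * S ≠ ∞ := ENNReal.mul_ne_top hStop hStop
    have hxδ : (1 - η) * (1 - η) ≤ x + δ :=
      (ENNReal.mul_le_mul_iff_left hSS0 hSStop).1 hmain
    -- conclude
    have h1 : (1:ℝ≥0∞) ≤ (1 - η) * (1 - η) + (η + η) := by
      calc (1:ℝ≥0∞) = (1 - η) + η := (tsub_add_cancel_of_le hη1).symm
        _ = (1 - η) * ((1 - η) + η) + η := by rw [tsub_add_cancel_of_le hη1, mul_one, tsub_add_cancel_of_le hη1]
        _ = ((1 - η) * (1 - η) + (1 - η) * η) + η := by rw [mul_add]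
        _ ≤ ((1 - η) * (1 - η) + η) + η :=
            add_le_add_left (add_le_add_right (mul_le_of_le_one_left zero_le tsub_le_self) _) _
        _ = (1 - η) * (1 - η) + (η + η) := by rw [add_assoc]
    have hηη : η + η = δ := ENNReal.add_halves δ
    have hδδ : δ + δ = ε := ENNReal.add_halves ε
    calc (1:ℝ≥0∞) ≤ (1 - η) * (1 - η) + (η + η) := h1
      _ ≤ (x + δ) + (η + η) := add_le_add_left hxδ _
      _ = x + (δ + δ) := by rw [hηη, add_assoc]
      _ = x + ε := by rw [hδδ]
  -- finish
  refine le_antisymm prob_le_one ?_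
  refine ENNReal.le_of_forall_pos_le_add fun ε hε _ => ?_
  set ε' : ℝ≥0∞ := min (ε : ℝ≥0∞) 1 with hε'
  have hε'0 : 0 < ε' := lt_min (by exact_mod_cast hε) one_pos
  have hε'1 : ε' ≤ 1 := min_le_right _ _
  have hkey := key ε' hε'0 hε'1
  have : (1:ℝ≥0∞) - ε' ≤ ℙ (limsup B atTop) := by
    rw [hinf]
    exact le_iInf fun m => tsub_le_iff_right.2 (hkey m)
  calc (1:ℝ≥0∞) ≤ (1 - ε') + ε' := (tsub_add_cancel_of_le hε'1).symm.le
    _ ≤ ℙ (limsup B atTop) + ε' := add_le_add_left this _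
    _ ≤ ℙ (limsup B atTop) + ε := add_le_add_right (min_le_left _ _) _
end

section
/- Let (p_n) and (a_n) be sequences of nonnegative real numbers with ∑_n p_n = ∞ and a_n → 0 as n → ∞. Then there exist real numbers p'_n with 0 ≤ p'_n ≤ p_n for every n such that ∑_n p'_n = ∞ and ∑_n p'_n a_n < ∞. -/
open Filter

/-- **Lemma.** Let `p n` and `a n` be nonnegative reals with `∑ p n = ∞`
(partial sums tend to infinity) and `a n → 0`. Then there exist `p' n` with
`0 ≤ p' n ≤ p n` for every `n`, such that `∑ p' n = ∞` and `∑ p' n * a n < ∞`. -/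
theorem exists_thinned_sequence
    (p a : ℕ → ℝ)
    (hp : ∀ n, 0 ≤ p n) (ha : ∀ n, 0 ≤ a n)
    (hpsum : Tendsto (fun N => ∑ n ∈ Finset.range N, p n) atTop atTop)
    (ha0 : Tendsto a atTop (nhds 0)) :
    ∃ p' : ℕ → ℝ, (∀ n, 0 ≤ p' n) ∧ (∀ n, p' n ≤ p n) ∧
      Tendsto (fun N => ∑ n ∈ Finset.range N, p' n) atTop atTop ∧
      Summable (fun n => p' n * a n) := by
  classical
  set S : ℕ → ℝ := fun N => ∑ n ∈ Finset.range N, p n with hSdef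
  -- step: we can always find a later index with small `a` and at least one more unit of mass
  have step : ∀ m k : ℕ, ∃ M, m < M ∧ (∀ n, M ≤ n → a n ≤ (1/2:ℝ)^k) ∧ S m + 1 ≤ S M := by
    intro m k
    have hε : (0:ℝ) < (1/2)^k := by positivity
    have h1 : ∀ᶠ n in atTop, a n < (1/2:ℝ)^k := ha0.eventually_lt_const hε
    obtain ⟨m0, hm0⟩ := eventually_atTop.1 h1
    obtain ⟨m1, hm1⟩ := eventually_atTop.1 (hpsum.eventually_ge_atTop (S m + 1))
    refine ⟨max (max (m+1) m0) m1, ?_, ?_, ?_⟩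
    · exact lt_of_lt_of_le (Nat.lt_succ_self m) (le_trans (le_max_left _ _) (le_max_left _ _))
    · intro n hn
      exact le_of_lt (hm0 n (le_trans (le_trans (le_max_right _ _) (le_max_left _ _)) hn))
    · exact hm1 _ (le_max_right _ _)
  choose f hf1 hf2 hf3 using step
  -- the block boundaries
  have hNex : ∃ N : ℕ → ℕ, (∀ k, N k < N (k+1)) ∧ (∀ k n, N k ≤ n → a n ≤ (1/2:ℝ)^k) ∧
      (∀ k, S (N k) + 1 ≤ S (N (k+1))) := by
    refine ⟨fun k => Nat.rec (f 0 0) (fun k Nk => f Nk (k+1)) k,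
      fun k => hf1 _ (k+1), ?_, fun k => hf3 _ (k+1)⟩
    intro k
    cases k with
    | zero => exact hf2 0 0
    | succ k => exact hf2 _ (k+1)
  obtain ⟨N, hNlt, hNa, hNS⟩ := hNex
  have hNmono : StrictMono N := strictMono_nat_of_lt_succ hNlt
  -- block masses
  set B : ℕ → ℝ := fun k => S (N (k+1)) - S (N k) with hBdef
  have hB1 : ∀ k, (1:ℝ) ≤ B k := fun k => by have := hNS k; simp only [hBdef]; linarith
  have hB0 : ∀ k, (0:ℝ) < B k := fun k => lt_of_lt_of_le one_pos (hB1 k)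
  -- the block index of n
  set idx : ℕ → ℕ := fun n => Nat.findGreatest (fun k => N k ≤ n) n with hidxdef
  have hidx : ∀ k n, N k ≤ n → n < N (k+1) → idx n = k := by
    intro k n hkn hnk
    have hkle : k ≤ n := le_trans (hNmono.le_apply) hkn
    have h1 : k ≤ idx n := by
      simp only [hidxdef]
      exact Nat.le_findGreatest hkle hkn
    have h2 : idx n ≤ k := by
      by_contra h
      push_neg at h
      have hspec0 := Nat.findGreatest_spec (P := fun j => N j ≤ n) hkle hkn
      have hspec : N (idx n) ≤ n := by
        simpa only [hidxdef] using hspec0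
      have : N (k+1) ≤ N (idx n) := hNmono.monotone h
      omega
    omega
  -- the thinned sequence
  set p' : ℕ → ℝ := fun n => p n / B (idx n) with hp'def
  have hp'0 : ∀ n, 0 ≤ p' n := fun n => div_nonneg (hp n) (le_of_lt (hB0 _))
  have hp'le : ∀ n, p' n ≤ p n := fun n => div_le_self (hp n) (hB1 _)
  -- value on block k
  have hval : ∀ k n, N k ≤ n → n < N (k+1) → p' n = p n / B k := by
    intro k n hkn hnk
    simp only [hp'def, hidx k n hkn hnk]
  -- sum of p' over block k is 1
  have hblockp' : ∀ k, ∑ n ∈ Finset.Ico (N k) (N (k+1)), p' n = 1 := by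
    intro k
    have h1 : ∑ n ∈ Finset.Ico (N k) (N (k+1)), p' n
        = ∑ n ∈ Finset.Ico (N k) (N (k+1)), p n / B k := by
      refine Finset.sum_congr rfl ?_
      intro n hn
      rw [Finset.mem_Ico] at hn
      exact hval k n hn.1 hn.2
    have h2 : ∑ n ∈ Finset.Ico (N k) (N (k+1)), p n = B k := by
      rw [Finset.sum_Ico_eq_sub _ (le_of_lt (hNlt k))]
    rw [h1, ← Finset.sum_div, h2, div_self (ne_of_gt (hB0 k))]
  -- partial sums of p' at block boundaries grow linearly
  have hS' : ∀ K : ℕ, (K:ℝ) ≤ ∑ n ∈ Finset.range (N K), p' n := by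
    intro K
    induction K with
    | zero =>
      simpa using Finset.sum_nonneg (fun n _ => hp'0 n)
    | succ K ih =>
      rw [← Finset.sum_range_add_sum_Ico p' (le_of_lt (hNlt K)), hblockp' K]
      push_cast
      linarith
  have hmono' : Monotone (fun M => ∑ n ∈ Finset.range M, p' n) := by
    apply monotone_nat_of_le_succ
    intro M
    rw [Finset.sum_range_succ]
    have := hp'0 M
    linarith
  refine ⟨p', hp'0, hp'le, ?_, ?_⟩
  · rw [tendsto_atTop]
    intro b
    filter_upwards [eventually_ge_atTop (N ⌈b⌉₊)] with M hM
    calc b ≤ (⌈b⌉₊ : ℝ) := Nat.le_ceil b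
    _ ≤ ∑ n ∈ Finset.range (N ⌈b⌉₊), p' n := hS' _
    _ ≤ ∑ n ∈ Finset.range M, p' n := hmono' hM
  · -- summability
    have hterm0 : ∀ n, 0 ≤ p' n * a n := fun n => mul_nonneg (hp'0 n) (ha n)
    set C : ℝ := ∑ n ∈ Finset.range (N 0), p' n * a n with hCdef
    have hbound : ∀ K, ∑ n ∈ Finset.range (N K), p' n * a n
        ≤ C + ∑ k ∈ Finset.range K, (1/2:ℝ)^k := by
      intro K
      induction K with
      | zero => simp [hCdef]
      | succ K ih =>
        rw [← Finset.sum_range_add_sum_Ico (fun n => p' n * a n) (le_of_lt (hNlt K)),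
          Finset.sum_range_succ]
        have hblk : ∑ n ∈ Finset.Ico (N K) (N (K+1)), p' n * a n ≤ (1/2:ℝ)^K := by
          calc ∑ n ∈ Finset.Ico (N K) (N (K+1)), p' n * a n
              ≤ ∑ n ∈ Finset.Ico (N K) (N (K+1)), p' n * (1/2:ℝ)^K := by
                refine Finset.sum_le_sum ?_
                intro n hn
                rw [Finset.mem_Ico] at hn
                exact mul_le_mul_of_nonneg_left (hNa K n hn.1) (hp'0 n)
            _ = (1/2:ℝ)^K := by rw [← Finset.sum_mul, hblockp' K, one_mul]
        linarith
    refine summable_of_sum_range_le hterm0 (c := C + 2) ?_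
    intro M
    calc ∑ n ∈ Finset.range M, p' n * a n
        ≤ ∑ n ∈ Finset.range (N M), p' n * a n := by
          refine Finset.sum_le_sum_of_subset_of_nonneg ?_ (fun n _ _ => hterm0 n)
          exact Finset.range_subset_range.2 hNmono.le_apply
      _ ≤ C + ∑ k ∈ Finset.range M, (1/2:ℝ)^k := hbound M
      _ ≤ C + 2 := by have := sum_geometric_two_le M; linarith
end

section
/- Let (A_n) be a sequence of independent events in a probability space and (E_n) a sequence of events with P(E_n) → 0 as n → ∞. Suppose there is a constant C > 0 such that P(E_n ∩ A_n) ≤ C · P(A_n) · P(E_n) for all n. If ∑_n P(A_n) = ∞, then the events B_n = A_n \ E_n occur infinitely often almost surely, i.e., P(limsup_n B_n) = 1. -/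
open MeasureTheory ProbabilityTheory Filter
open scoped ENNReal

private lemma aux_one_add_sum_le_prod (s : Finset ℕ) (f : ℕ → ℝ≥0∞) :
    1 + ∑ i ∈ s, f i ≤ ∏ i ∈ s, (1 + f i) := by
  classical
  induction s using Finset.induction with
  | empty => simp
  | insert _ _ h ih =>
    rename_i a s
    rw [Finset.sum_insert h, Finset.prod_insert h]
    have h1 : (1 : ℝ≥0∞) ≤ ∏ i ∈ s, (1 + f i) :=
      Finset.one_le_prod' fun i _ => le_add_right le_rfl
    calc 1 + (f a + ∑ i ∈ s, f i) = (1 + ∑ i ∈ s, f i) + f a * 1 := by ring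
      _ ≤ (∏ i ∈ s, (1 + f i)) + f a * (∏ i ∈ s, (1 + f i)) :=
          add_le_add ih (mul_le_mul_right h1 _)
      _ = (1 + f a) * ∏ i ∈ s, (1 + f i) := by ring

/-- **Contaminated second Borel–Cantelli, relaxed independence.** If the events
`A n` are independent, `P (E n) → 0`, there is a constant `C > 0` with
`P (E n ∩ A n) ≤ C * P (A n) * P (E n)` for all `n`, and `∑ P (A n) = ∞`, then
the events `B n = A n \ E n` occur infinitely often almost surely. -/
theorem contaminated_borel_cantelli_bigO
    {Ω : Type*} [MeasureSpace Ω] [IsProbabilityMeasure (ℙ : Measure Ω)]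
    (A E : ℕ → Set Ω)
    (hA : ∀ n, MeasurableSet (A n)) (hE : ∀ n, MeasurableSet (E n))
    (hAindep : iIndepSet A ℙ)
    (hE0 : Tendsto (fun n => ℙ (E n)) atTop (nhds 0))
    (C : ℝ≥0∞) (hCpos : 0 < C) (hCtop : C ≠ ∞)
    (hAE : ∀ n, ℙ (E n ∩ A n) ≤ C * ℙ (A n) * ℙ (E n))
    (hsum : ∑' n, ℙ (A n) = ∞)
    (B : ℕ → Set Ω) (hB : ∀ n, B n = A n \ E n) :
    ℙ (limsup B atTop) = 1 := by
  classical
  -- product formula for complements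
  have hprod : ∀ s : Finset ℕ, ℙ (⋂ i ∈ s, (A i)ᶜ) = ∏ i ∈ s, (1 - ℙ (A i)) := by
    intro s
    have hmeas : ∀ i ∈ s,
        MeasurableSet[MeasurableSpace.comap (· ∈ A i) ⊤] ((A i)ᶜ) := by
      intro i _
      have : MeasurableSet[MeasurableSpace.comap (· ∈ A i) ⊤] (A i) :=
        ⟨{p | p}, trivial, rfl⟩
      exact this.compl
    have h1 : ℙ (⋂ i ∈ s, (A i)ᶜ) = ∏ i ∈ s, ℙ ((A i)ᶜ) :=
      hAindep.iIndep_comap_mem.meas_biInter hmeas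
    rw [h1]
    exact Finset.prod_congr rfl fun i _ => prob_compl_eq_one_sub (hA i)
  -- key finite estimate
  have key : ∀ s : Finset ℕ, ℙ (⋂ i ∈ s, (B i)ᶜ) ≤
      (1 + ∑ i ∈ s, ℙ (A i))⁻¹ + ∑ i ∈ s, ℙ (E i ∩ A i) := by
    intro s
    have hsub : (⋂ i ∈ s, (B i)ᶜ) ⊆ (⋂ i ∈ s, (A i)ᶜ) ∪ ⋃ i ∈ s, E i ∩ A i := by
      intro x hx
      simp only [Set.mem_iInter] at hx
      by_cases hxA : ∀ i ∈ s, x ∉ A i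
      · left
        simp only [Set.mem_iInter]
        exact fun i hi => hxA i hi
      · right
        push_neg at hxA
        obtain ⟨i, hi, hxAi⟩ := hxA
        have hxB := hx i hi
        rw [hB] at hxB
        simp only [Set.mem_compl_iff, Set.mem_diff, not_and, not_not] at hxB
        exact Set.mem_biUnion hi ⟨hxB hxAi, hxAi⟩
    have hAbound : ℙ (⋂ i ∈ s, (A i)ᶜ) ≤ (1 + ∑ i ∈ s, ℙ (A i))⁻¹ := by
      rw [hprod s]
      rw [ENNReal.le_inv_iff_mul_le]
      calc (∏ i ∈ s, (1 - ℙ (A i))) * (1 + ∑ i ∈ s, ℙ (A i))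
          ≤ (∏ i ∈ s, (1 - ℙ (A i))) * ∏ i ∈ s, (1 + ℙ (A i)) :=
            mul_le_mul_right (aux_one_add_sum_le_prod s _) _
        _ = ∏ i ∈ s, (1 - ℙ (A i)) * (1 + ℙ (A i)) := (Finset.prod_mul_distrib).symm
        _ ≤ 1 := by
            apply Finset.prod_le_one (fun i _ => zero_le)
            intro i _
            calc (1 - ℙ (A i)) * (1 + ℙ (A i))
                = (1 - ℙ (A i)) * 1 + (1 - ℙ (A i)) * ℙ (A i) := by rw [mul_add]
              _ ≤ (1 - ℙ (A i)) + ℙ (A i) := by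
                  rw [mul_one]
                  exact add_le_add le_rfl (mul_le_of_le_one_left zero_le tsub_le_self)
              _ = 1 := tsub_add_cancel_of_le prob_le_one
    calc ℙ (⋂ i ∈ s, (B i)ᶜ) ≤ ℙ ((⋂ i ∈ s, (A i)ᶜ) ∪ ⋃ i ∈ s, E i ∩ A i) :=
          measure_mono hsub
      _ ≤ ℙ (⋂ i ∈ s, (A i)ᶜ) + ℙ (⋃ i ∈ s, E i ∩ A i) := measure_union_le _ _
      _ ≤ (1 + ∑ i ∈ s, ℙ (A i))⁻¹ + ∑ i ∈ s, ℙ (E i ∩ A i) :=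
          add_le_add hAbound (measure_biUnion_finset_le s _)
  -- the tail intersections are null
  have hnull : ∀ m : ℕ, ℙ (⋂ n, ⋂ (_ : m ≤ n), (B n)ᶜ) = 0 := by
    intro m
    refine le_antisymm ?_ zero_le
    refine ENNReal.le_of_forall_pos_le_add fun ε hε _ => ?_
    rw [zero_add]
    have hε' : ((ε : ℝ≥0∞)) ≠ 0 := by
      simpa using (ENNReal.coe_pos.2 hε).ne'
    have hhalf : (0 : ℝ≥0∞) < (ε : ℝ≥0∞) / 2 :=
      ENNReal.div_pos hε' (by norm_num)
    -- choose k with (1+k)⁻¹ ≤ ε/2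
    obtain ⟨k, hk⟩ : ∃ k : ℕ, ((1 : ℝ≥0∞) + k)⁻¹ ≤ (ε : ℝ≥0∞) / 2 := by
      obtain ⟨k, hk⟩ := ENNReal.exists_inv_nat_lt hhalf.ne'
      refine ⟨k, le_trans ?_ hk.le⟩
      exact ENNReal.inv_le_inv.2 (le_add_self)
    -- choose threshold δ and m'
    set δ : ℝ≥0∞ := ((ε : ℝ≥0∞) / 2) / (C * (k + 1)) with hδ
    have hCk0 : C * ((k : ℝ≥0∞) + 1) ≠ 0 := by
      simp [hCpos.ne', ENNReal.add_eq_top]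
    have hCktop : C * ((k : ℝ≥0∞) + 1) ≠ ∞ := by
      exact ENNReal.mul_ne_top hCtop (by simp [ENNReal.add_eq_top])
    have hδpos : 0 < δ := ENNReal.div_pos hhalf.ne' hCktop
    obtain ⟨m₀, hm₀⟩ : ∃ m₀, ∀ n ≥ m₀, ℙ (E n) < δ :=
      eventually_atTop.1 (hE0.eventually_lt_const hδpos)
    set m' := max m m₀ with hm'
    -- choose M with k ≤ ∑_{Ico m' M} ℙ(A i) ≤ k + 1
    have hex : ∃ M : ℕ, (k : ℝ≥0∞) ≤ ∑ i ∈ Finset.Ico m' M, ℙ (A i) := by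
      have hsup : (⨆ n, ∑ i ∈ Finset.range n, ℙ (A i)) = ∞ := by
        rw [← ENNReal.tsum_eq_iSup_sum' _ Finset.exists_nat_subset_range]
        · exact hsum
      have hlt : ((k : ℝ≥0∞) + m') < ⨆ n, ∑ i ∈ Finset.range n, ℙ (A i) := by
        rw [hsup]; exact ENNReal.add_lt_top.2 ⟨ENNReal.natCast_lt_top k,
          ENNReal.natCast_lt_top m'⟩
      obtain ⟨M, hM⟩ := lt_iSup_iff.1 hlt
      refine ⟨max M m', ?_⟩
      have hsplit : ∑ i ∈ Finset.range m', ℙ (A i)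
          + ∑ i ∈ Finset.Ico m' (max M m'), ℙ (A i)
          = ∑ i ∈ Finset.range (max M m'), ℙ (A i) := by
        rw [Finset.range_eq_Ico, Finset.range_eq_Ico]
        exact Finset.sum_Ico_consecutive _ (Nat.zero_le _) (le_max_right _ _)
      have hle1 : ∑ i ∈ Finset.range m', ℙ (A i) ≤ (m' : ℝ≥0∞) := by
        calc ∑ i ∈ Finset.range m', ℙ (A i) ≤ ∑ i ∈ Finset.range m', 1 :=
              Finset.sum_le_sum fun i _ => prob_le_one
          _ = (m' : ℝ≥0∞) := by simp
      have hM' : ((k : ℝ≥0∞) + m') < ∑ i ∈ Finset.range (max M m'), ℙ (A i) :=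
        lt_of_lt_of_le hM (Finset.sum_le_sum_of_subset
          (Finset.range_subset_range.2 (le_max_left _ _)))
      rw [← hsplit] at hM'
      have := lt_of_lt_of_le hM'
        (add_le_add_left hle1 _)
      rw [add_comm ((k : ℝ≥0∞)) _] at this
      exact le_of_lt ((ENNReal.add_lt_add_iff_left (ENNReal.natCast_lt_top m').ne).1 this)
    set M := Nat.find hex with hMdef
    clear_value M
    have hMk : (k : ℝ≥0∞) ≤ ∑ i ∈ Finset.Ico m' M, ℙ (A i) := by
      rw [hMdef]; exact Nat.find_spec hex
    have hMk2 : ∑ i ∈ Finset.Ico m' M, ℙ (A i) ≤ (k : ℝ≥0∞) + 1 := by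
      rcases le_or_gt M m' with h | h
      · rw [Finset.Ico_eq_empty (by omega)]
        simp
      · obtain ⟨M₁, rfl⟩ : ∃ M₁, M = M₁ + 1 := ⟨M - 1, by omega⟩
        have hm'M₁ : m' ≤ M₁ := by omega
        have hmin : ¬ ((k : ℝ≥0∞) ≤ ∑ i ∈ Finset.Ico m' M₁, ℙ (A i)) :=
          Nat.find_min hex (by omega)
        push_neg at hmin
        rw [Finset.sum_Ico_succ_top hm'M₁]
        exact add_le_add hmin.le prob_le_one
    -- main estimate
    have hsubset : (⋂ n, ⋂ (_ : m ≤ n), (B n)ᶜ) ⊆ ⋂ i ∈ Finset.Ico m' M, (B i)ᶜ := by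
      intro x hx
      simp only [Set.mem_iInter] at hx ⊢
      intro i hi
      rw [Finset.mem_Ico] at hi
      exact hx i (le_trans (le_max_left m m₀) hi.1)
    calc ℙ (⋂ n, ⋂ (_ : m ≤ n), (B n)ᶜ)
        ≤ ℙ (⋂ i ∈ Finset.Ico m' M, (B i)ᶜ) := measure_mono hsubset
      _ ≤ (1 + ∑ i ∈ Finset.Ico m' M, ℙ (A i))⁻¹
          + ∑ i ∈ Finset.Ico m' M, ℙ (E i ∩ A i) := key _
      _ ≤ ((1 : ℝ≥0∞) + k)⁻¹ + ∑ i ∈ Finset.Ico m' M, C * δ * ℙ (A i) := by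
          refine add_le_add (ENNReal.inv_le_inv.2 (add_le_add_right hMk _)) ?_
          refine Finset.sum_le_sum fun i hi => ?_
          rw [Finset.mem_Ico] at hi
          have hEi : ℙ (E i) ≤ δ :=
            (hm₀ i (le_trans (le_max_right m m₀) hi.1)).le
          calc ℙ (E i ∩ A i) ≤ C * ℙ (A i) * ℙ (E i) := hAE i
            _ ≤ C * ℙ (A i) * δ := mul_le_mul_right hEi _
            _ = C * δ * ℙ (A i) := by ring
      _ ≤ (ε : ℝ≥0∞) / 2 + C * δ * ((k : ℝ≥0∞) + 1) := by
          rw [← Finset.mul_sum]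
          exact add_le_add hk (mul_le_mul_right hMk2 _)
      _ = (ε : ℝ≥0∞) / 2 + (ε : ℝ≥0∞) / 2 := by
          congr 1
          rw [mul_comm C δ, mul_assoc]
          exact ENNReal.div_mul_cancel hCk0 hCktop
      _ = (ε : ℝ≥0∞) := ENNReal.add_halves _
  -- conclude
  have hcompl : ℙ ((limsup B atTop)ᶜ) = 0 := by
    have hls : limsup B atTop = ⋂ m, ⋃ n, ⋃ (_ : m ≤ n), B n :=
      limsup_eq_iInf_iSup_of_nat
    rw [hls]
    simp only [Set.compl_iInter, Set.compl_iUnion]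
    exact measure_iUnion_null fun m => hnull m
  have h1 : (1 : ℝ≥0∞) ≤ ℙ (limsup B atTop) := by
    have := measure_union_le (μ := (ℙ : Measure Ω)) (limsup B atTop) (limsup B atTop)ᶜ
    rw [Set.union_compl_self, measure_univ, hcompl, add_zero] at this
    exact this
  exact le_antisymm prob_le_one h1
end

section
/- Fix θ ∈ (0, 1) and define T_0(s) = s / (log(log s))^θ for s > 10. Let s_n = 2n · log(log(√n)) for n ≥ 3 and let (δ_n) be any sequence of real numbers with δ_n − log(log(√n)) → 0 as n → ∞. Then T_0(s_n) − T_0(s_n − δ_n) → ∞ as n → ∞. -/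
open Filter Real

private lemma aux_rpow_sub {θ a b : ℝ} (h0 : 0 ≤ θ) (h1 : θ ≤ 1) (hb : 1 ≤ b) (hba : b ≤ a) :
    a ^ θ - b ^ θ ≤ a - b := by
  have hbpos : (0:ℝ) < b := by linarith
  have hapos : (0:ℝ) < a := by linarith
  have ht : (0:ℝ) ≤ a / b - 1 := by
    rw [le_sub_iff_add_le, zero_add, le_div_iff₀ hbpos]; linarith
  have key : (a / b) ^ θ ≤ 1 + θ * (a / b - 1) := by
    have h := rpow_one_add_le_one_add_mul_self (s := a / b - 1) (by linarith) h0 h1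
    simpa using h
  have ha : a ^ θ = b ^ θ * (a / b) ^ θ := by
    rw [← Real.mul_rpow hbpos.le (by positivity)]
    congr 1
    field_simp
  have hbθ : b ^ θ ≤ b := by
    calc b ^ θ ≤ b ^ (1:ℝ) := Real.rpow_le_rpow_of_exponent_le hb h1
    _ = b := Real.rpow_one b
  have hbθ1 : (1:ℝ) ≤ b ^ θ := Real.one_le_rpow hb h0
  have h5 : b * (a / b - 1) = a - b := by field_simp
  have step1 : a ^ θ - b ^ θ ≤ b ^ θ * (θ * (a / b - 1)) := by
    rw [ha]
    have := mul_le_mul_of_nonneg_left key (by linarith : (0:ℝ) ≤ b ^ θ)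
    nlinarith
  have step2 : b ^ θ * (θ * (a / b - 1)) ≤ b * (θ * (a / b - 1)) := by
    have hθt : 0 ≤ θ * (a / b - 1) := mul_nonneg h0 ht
    exact mul_le_mul_of_nonneg_right hbθ hθt
  have step3 : b * (θ * (a / b - 1)) = θ * (a - b) := by
    rw [← h5]; ring
  nlinarith [sub_nonneg.mpr hba]

set_option maxHeartbeats 2000000 in
/-- For `θ ∈ (0,1)`, `T₀ s = s / (log (log s))^θ`, `s n = 2 n log (log (√n))`,
and any `δ n` with `δ n - log (log (√n)) → 0`, one has
`T₀ (s n) - T₀ (s n - δ n) → ∞`. -/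
theorem T0_gap_tendsto_atTop
    (θ : ℝ) (hθ : θ ∈ Set.Ioo (0 : ℝ) 1)
    (T₀ : ℝ → ℝ) (hT₀ : ∀ s > 10, T₀ s = s / (Real.log (Real.log s)) ^ θ)
    (s : ℕ → ℝ) (hs : ∀ n ≥ 3, s n = 2 * n * Real.log (Real.log (Real.sqrt n)))
    (δ : ℕ → ℝ)
    (hδ : Tendsto (fun n => δ n - Real.log (Real.log (Real.sqrt n))) atTop (nhds 0)) :
    Tendsto (fun n => T₀ (s n) - T₀ (s n - δ n)) atTop atTop := by
  obtain ⟨hθ0, hθ1⟩ := hθ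
  set L : ℕ → ℝ := fun n => Real.log (Real.log (Real.sqrt n)) with hLdef
  -- L tends to infinity
  have hsqrt : Tendsto (fun n : ℕ => Real.sqrt n) atTop atTop := by
    have h1 : Tendsto (fun x : ℝ => x ^ ((1:ℝ)/2)) atTop atTop :=
      tendsto_rpow_atTop (by norm_num)
    have h2 : Tendsto (fun n : ℕ => ((n:ℝ)) ^ ((1:ℝ)/2)) atTop atTop :=
      h1.comp tendsto_natCast_atTop_atTop
    refine h2.congr (fun n => ?_)
    exact (Real.sqrt_eq_rpow _).symm
  have hL : Tendsto L atTop atTop :=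
    Real.tendsto_log_atTop.comp (Real.tendsto_log_atTop.comp hsqrt)
  -- the minorant tends to infinity
  have hmin : Tendsto (fun n => (L n) ^ (1 - θ) / 4 - 1) atTop atTop := by
    have h2 : Tendsto (fun x : ℝ => x ^ (1 - θ)) atTop atTop :=
      tendsto_rpow_atTop (by linarith)
    have h3 : Tendsto (fun n => (L n) ^ (1 - θ) / 4) atTop atTop :=
      (h2.comp hL).atTop_div_const (by norm_num)
    have h4 := tendsto_atTop_add_const_right atTop (-1) h3
    simpa [sub_eq_add_neg] using h4
  refine tendsto_atTop_mono' atTop ?_ hmin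
  -- eventual facts
  have h1 : ∀ᶠ n in atTop, |δ n - L n| < 1 := by
    have := Metric.tendsto_nhds.mp hδ 1 one_pos
    filter_upwards [this] with n hn
    simpa [Real.dist_eq] using hn
  have h2 : ∀ᶠ n in atTop, (4:ℝ) ≤ L n := hL.eventually_ge_atTop 4
  have h3 : ∀ᶠ n : ℕ in atTop, (2 * Real.exp 9 : ℝ) ≤ (n:ℝ) :=
    tendsto_natCast_atTop_atTop.eventually_ge_atTop _
  have h4 : ∀ᶠ n in atTop, 3 ≤ n := eventually_ge_atTop 3
  filter_upwards [h1, h2, h3, h4] with n hδn hLn hnbig hn3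
  -- setup
  have hexp9 : (10:ℝ) ≤ Real.exp 9 := by
    have := Real.add_one_le_exp (9:ℝ); linarith
  have hnR : (20:ℝ) ≤ (n:ℝ) := by linarith
  have hn2 : (2:ℝ) ≤ (n:ℝ) := by linarith
  set ℓ := L n with hℓdef
  have hℓ4 : (4:ℝ) ≤ ℓ := hLn
  set d := δ n with hddef
  have hd1 : ℓ - 1 ≤ d := by
    have := abs_lt.mp hδn; linarith [this.1]
  have hd2 : d ≤ ℓ + 1 := by
    have := abs_lt.mp hδn; linarith [this.2]
  have hsn : s n = 2 * n * ℓ := hs n hn3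
  set A := s n with hAdef
  set B := s n - d with hBdef
  set u := Real.log (Real.sqrt n) with hudef
  have hsqrt2 : (2:ℝ) ≤ Real.sqrt n := by
    have h4n : (4:ℝ) ≤ (n:ℝ) := by linarith
    have : Real.sqrt 4 ≤ Real.sqrt n := Real.sqrt_le_sqrt h4n
    rwa [show (4:ℝ) = 2^2 by norm_num, Real.sqrt_sq (by norm_num : (0:ℝ) ≤ 2)] at this
  have hupos : (0:ℝ) < u := Real.log_pos (by linarith)
  have hℓu : ℓ ≤ u - 1 := Real.log_le_sub_one_of_pos hupos
  have hu5 : (5:ℝ) ≤ u := by linarith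
  -- bounds on A and B
  have hAeq : A = 2 * n * ℓ := hsn
  have hA10 : (10:ℝ) < A := by
    have hp : (20:ℝ) * 4 ≤ (n:ℝ) * ℓ := mul_le_mul hnR hℓ4 (by norm_num) (by linarith)
    rw [hAeq]; linarith
  have hBA : B = A - d := rfl
  have hBge : (n:ℝ) / 2 ≤ B := by
    have hp : (0:ℝ) ≤ ((n:ℝ) - 1) * (2 * ℓ - 1) :=
      mul_nonneg (by linarith) (by linarith)
    rw [hBA, hAeq]; nlinarith [hp]
  have hB10 : (10:ℝ) < B := by
    have h9 := Real.add_one_lt_exp (by norm_num : (9:ℝ) ≠ 0)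
    linarith
  have hBpos : (0:ℝ) < B := by linarith
  have hApos : (0:ℝ) < A := by linarith
  have hdpos : (0:ℝ) < d := by linarith
  have hBA' : B ≤ A := by rw [hBA]; linarith
  set la := Real.log A with hladef
  set lb := Real.log B with hlbdef
  -- lb ≥ 2u - 1 ≥ 9 and la ≥ lb
  have hlb_ge : 2 * u - 1 ≤ lb := by
    have hlog2 : Real.log 2 ≤ 1 := by
      have := Real.log_le_sub_one_of_pos (by norm_num : (0:ℝ) < 2); linarith
    have hlogn : Real.log (n:ℝ) = 2 * u := by
      rw [hudef, Real.log_sqrt (Nat.cast_nonneg n)]; ring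
    have h1 : Real.log ((n:ℝ)/2) ≤ lb :=
      Real.log_le_log (by positivity) hBge
    have h2 : Real.log ((n:ℝ)/2) = Real.log (n:ℝ) - Real.log 2 :=
      Real.log_div (by positivity) (by norm_num)
    rw [h2, hlogn] at h1; linarith
  have hlb9 : (9:ℝ) ≤ lb := by linarith
  have hlbpos : (0:ℝ) < lb := by linarith
  have hlalb : lb ≤ la := Real.log_le_log hBpos hBA'
  have hlapos : (0:ℝ) < la := by linarith
  set a := Real.log la with hadef
  set b := Real.log lb with hbdef
  have hexp1 : Real.exp 1 ≤ 9 := by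
    have := Real.exp_one_lt_d9; linarith
  have hb1 : (1:ℝ) ≤ b := by
    have h := Real.log_le_log (Real.exp_pos 1) (le_trans hexp1 hlb9)
    rwa [Real.log_exp] at h
  have hab : b ≤ a := Real.log_le_log hlbpos hlalb
  have ha1 : (1:ℝ) ≤ a := le_trans hb1 hab
  -- a ≤ ℓ + 2 ≤ 2ℓ
  have hun : u ≤ (n:ℝ) := by
    have h1 : u ≤ Real.sqrt n - 1 := Real.log_le_sub_one_of_pos (by positivity)
    have h2 : Real.sqrt n ≤ (n:ℝ) := by
      have h3 : (n:ℝ) ≤ (n:ℝ)^2 := by nlinarith [hn2, (Nat.cast_nonneg n : (0:ℝ) ≤ (n:ℝ))]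
      have h4 := Real.sqrt_le_sqrt h3
      rwa [Real.sqrt_sq (by positivity : (0:ℝ) ≤ (n:ℝ))] at h4
    linarith
  have hAn3 : A ≤ (n:ℝ)^3 := by
    have hℓn : ℓ ≤ (n:ℝ) := by linarith
    have hh1 : 2*(n:ℝ)*ℓ ≤ 2*(n:ℝ)*(n:ℝ) :=
      mul_le_mul_of_nonneg_left hℓn (by positivity)
    have hh2 : 2*(n:ℝ)*(n:ℝ) ≤ (n:ℝ)^3 := by
      have h := mul_le_mul_of_nonneg_right hn2 (by positivity : (0:ℝ) ≤ (n:ℝ)^2)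
      calc 2*(n:ℝ)*(n:ℝ) = 2*(n:ℝ)^2 := by ring
      _ ≤ (n:ℝ)*(n:ℝ)^2 := h
      _ = (n:ℝ)^3 := by ring
    rw [hAeq]; linarith
  have hla6u : la ≤ 6 * u := by
    have h1 : la ≤ Real.log ((n:ℝ)^3) := Real.log_le_log hApos hAn3
    have h2 : Real.log ((n:ℝ)^3) = 3 * Real.log (n:ℝ) := by
      rw [Real.log_pow]; push_cast; ring
    have hlogn : Real.log (n:ℝ) = 2 * u := by
      rw [hudef, Real.log_sqrt (Nat.cast_nonneg n)]; ring
    rw [h2, hlogn] at h1; linarith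
  have hlog6 : Real.log 6 ≤ 2 := by
    have h := Real.exp_one_gt_d9
    have h6 : (6:ℝ) ≤ Real.exp 2 := by
      have : Real.exp 2 = Real.exp 1 * Real.exp 1 := by
        rw [← Real.exp_add]; norm_num
      nlinarith
    have := Real.log_le_log (by norm_num : (0:ℝ) < 6) h6
    rwa [Real.log_exp] at this
  have haℓ2 : a ≤ ℓ + 2 := by
    have h1 : a ≤ Real.log (6 * u) := Real.log_le_log hlapos hla6u
    have h2 : Real.log (6 * u) = Real.log 6 + Real.log u :=
      Real.log_mul (by norm_num) (ne_of_gt hupos)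
    rw [h2] at h1
    have : Real.log u = ℓ := rfl
    rw [this] at h1; linarith
  have ha2ℓ : a ≤ 2 * ℓ := by linarith
  -- rpow positivity
  have haθpos : (0:ℝ) < a ^ θ := Real.rpow_pos_of_pos (by linarith) θ
  have hbθpos : (0:ℝ) < b ^ θ := Real.rpow_pos_of_pos (by linarith) θ
  have haθ1 : (1:ℝ) ≤ a ^ θ := Real.one_le_rpow ha1 hθ0.le
  have hbθ1 : (1:ℝ) ≤ b ^ θ := Real.one_le_rpow hb1 hθ0.le
  have hℓpos : (0:ℝ) < ℓ := by linarith
  -- a^θ ≤ 2 ℓ^θ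
  have haθ2ℓ : a ^ θ ≤ 2 * ℓ ^ θ := by
    have h1 : a ^ θ ≤ (2 * ℓ) ^ θ :=
      Real.rpow_le_rpow (by linarith) ha2ℓ hθ0.le
    have h2 : (2 * ℓ) ^ θ = 2 ^ θ * ℓ ^ θ :=
      Real.mul_rpow (by norm_num) hℓpos.le
    have h3 : (2:ℝ) ^ θ ≤ 2 := by
      calc (2:ℝ) ^ θ ≤ 2 ^ (1:ℝ) :=
        Real.rpow_le_rpow_of_exponent_le (by norm_num) hθ1.le
      _ = 2 := Real.rpow_one 2
    have hℓθpos : (0:ℝ) < ℓ ^ θ := Real.rpow_pos_of_pos hℓpos θ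
    calc a ^ θ ≤ 2 ^ θ * ℓ ^ θ := by rw [← h2]; exact h1
    _ ≤ 2 * ℓ ^ θ := mul_le_mul_of_nonneg_right h3 hℓθpos.le
  -- main term lower bound
  have hmain : ℓ ^ (1 - θ) / 4 ≤ d / a ^ θ := by
    have h1 : ℓ / 2 ≤ d := by linarith
    have h2 : (ℓ/2) / (2 * ℓ ^ θ) ≤ d / a ^ θ :=
      div_le_div₀ (by linarith) h1 haθpos haθ2ℓ
    have hℓθpos : (0:ℝ) < ℓ ^ θ := Real.rpow_pos_of_pos hℓpos θ
    have h3 : ℓ ^ (1 - θ) = ℓ / ℓ ^ θ := by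
      rw [Real.rpow_sub hℓpos, Real.rpow_one]
    have h4 : (ℓ/2) / (2 * ℓ ^ θ) = ℓ ^ (1 - θ) / 4 := by
      rw [h3, div_div, div_div]
      congr 1
      ring
    linarith [h2, h4.le, h4.ge]
  -- la - lb and a - b bounds
  have hla_lb : la ≤ lb + d / B := by
    have hBd : A = B + d := by rw [hBA]; ring
    have hAB : A / B = 1 + d / B := by
      rw [hBd, add_div, div_self (ne_of_gt hBpos)]
    have h1 : la - lb = Real.log (A / B) := (Real.log_div (ne_of_gt hApos) (ne_of_gt hBpos)).symm
    have h2 : Real.log (A / B) ≤ A / B - 1 := Real.log_le_sub_one_of_pos (by positivity)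
    have h3 : A / B - 1 = d / B := by rw [hAB]; ring
    have h5 : la - lb ≤ d / B := by rw [h1]; linarith [h2, h3.le, h3.ge]
    linarith
  have hab_bound : a - b ≤ d / (B * lb) := by
    have h1 : la / lb ≤ 1 + d / (B * lb) := by
      rw [div_le_iff₀ hlbpos]
      have : (1 + d / (B * lb)) * lb = lb + d / B := by field_simp
      rw [this]; exact hla_lb
    have h2 : a - b = Real.log (la / lb) :=
      (Real.log_div (ne_of_gt hlapos) (ne_of_gt hlbpos)).symm
    have h3 : Real.log (la / lb) ≤ la / lb - 1 := Real.log_le_sub_one_of_pos (by positivity)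
    rw [h2]; linarith
  -- correction term ≤ 1
  have hdlb : d ≤ lb := by linarith
  have hcorr : B * (a ^ θ - b ^ θ) / (a ^ θ * b ^ θ) ≤ 1 := by
    have hsub : a ^ θ - b ^ θ ≤ d / (B * lb) := by
      have := aux_rpow_sub hθ0.le hθ1.le hb1 hab
      linarith
    have h1 : B * (a ^ θ - b ^ θ) ≤ B * (d / (B * lb)) :=
      mul_le_mul_of_nonneg_left hsub hBpos.le
    have h2 : B * (d / (B * lb)) = d / lb := by field_simp
    have h3 : d / lb ≤ 1 := by
      rw [div_le_one hlbpos]; exact hdlb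
    have hsubnn : 0 ≤ a ^ θ - b ^ θ := by
      have := Real.rpow_le_rpow (by linarith : (0:ℝ) ≤ b) hab hθ0.le
      linarith
    have h4 : B * (a ^ θ - b ^ θ) / (a ^ θ * b ^ θ) ≤ B * (a ^ θ - b ^ θ) := by
      apply div_le_self (mul_nonneg hBpos.le hsubnn)
      have := mul_le_mul haθ1 hbθ1 (by norm_num) (by linarith)
      linarith
    calc B * (a ^ θ - b ^ θ) / (a ^ θ * b ^ θ) ≤ B * (a ^ θ - b ^ θ) := h4
    _ ≤ d / lb := by rw [← h2]; exact h1
    _ ≤ 1 := h3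
  -- final assembly
  have hT₀A : T₀ A = A / a ^ θ := hT₀ A hA10
  have hT₀B : T₀ B = B / b ^ θ := hT₀ B hB10
  have hkey : A / a ^ θ - B / b ^ θ
      = d / a ^ θ - B * (a ^ θ - b ^ θ) / (a ^ θ * b ^ θ) := by
    rw [hBA]
    field_simp
    ring
  have : T₀ A - T₀ B = d / a ^ θ - B * (a ^ θ - b ^ θ) / (a ^ θ * b ^ θ) := by
    rw [hT₀A, hT₀B, hkey]
  show ℓ ^ (1 - θ) / 4 - 1 ≤ T₀ A - T₀ B
  rw [this]
  linarith
end
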